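/- Let n, K ∈ ℕ with K ≥ 1, Δt > 0, ζ ∈ [1/2, 1], let M ∈ ℝ^{n×n} be symmetric positive definite and A ∈ ℝ^{n×n} symmetric positive semidefinite. Let e, ė : {0,…,K} → ℝⁿ and r : {1,…,K} → ℝⁿ satisfy e⁰ = 0, ė⁰ = 0 and, for every k ∈ {1,…,K}, the error scheme equations (1/Δt)·M(ė^k − ė^{k−1}) + A((1−ζ)e^{k−1} + ζe^k) = r^k and (1/Δt)(e^k − e^{k−1}) = (1−ζ)ė^{k−1} + ζė^k. Then for every k ∈ {1,…,K}, the energy norm satisfies ((ė^k)ᵀMė^k + (e^k)ᵀAe^k)^{1/2} ≤ 2Δt·Σ_{k'=1}^{k} ((r^{k'})ᵀM⁻¹r^{k'})^{1/2}. -/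

import Mathlib

open Matrix Finset

lemma psd_nonneg {n : ℕ} {B : Matrix (Fin n) (Fin n) ℝ} (hB : B.PosSemidef)
    (x : Fin n → ℝ) : 0 ≤ x ⬝ᵥ (B *ᵥ x) := by
  simpa using hB.re_dotProduct_nonneg x

lemma sym_dot {n : ℕ} {B : Matrix (Fin n) (Fin n) ℝ} (hB : B.IsHermitian)
    (x y : Fin n → ℝ) : x ⬝ᵥ (B *ᵥ y) = y ⬝ᵥ (B *ᵥ x) := by
  have ht : Bᵀ = B := by have h : B.IsSymm := by simpa using hB
                         exact h
  rw [dotProduct_mulVec, ← mulVec_transpose, ht, dotProduct_comm]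

/-- Cauchy–Schwarz for a positive semidefinite matrix. -/
lemma psd_cs {n : ℕ} {B : Matrix (Fin n) (Fin n) ℝ} (hB : B.PosSemidef)
    (x y : Fin n → ℝ) :
    x ⬝ᵥ (B *ᵥ y) ≤ Real.sqrt (x ⬝ᵥ (B *ᵥ x)) * Real.sqrt (y ⬝ᵥ (B *ᵥ y)) := by
  have key : ∀ t : ℝ, 0 ≤ (y ⬝ᵥ (B *ᵥ y)) * (t * t) + (2 * (x ⬝ᵥ (B *ᵥ y))) * t
      + x ⬝ᵥ (B *ᵥ x) := by
    intro t
    have h := psd_nonneg hB (x + t • y)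
    have hsym := sym_dot hB.isHermitian x y
    simp only [mulVec_add, mulVec_smul, dotProduct_add, add_dotProduct,
      smul_dotProduct, dotProduct_smul, smul_eq_mul] at h
    rw [← hsym] at h
    ring_nf at h ⊢
    linarith
  rcases eq_or_lt_of_le (psd_nonneg hB y) with h0 | hpos
  · -- y ⬝ B y = 0 : then x⬝By ≤ 0? From key with discriminant: linear in t nonneg ⇒ coeff 0
    have h2 : ∀ t : ℝ, 0 ≤ (2 * (x ⬝ᵥ (B *ᵥ y))) * t + x ⬝ᵥ (B *ᵥ x) := by
      intro t; have := key t; rw [← h0] at this; nlinarith [this]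
    have hxy : x ⬝ᵥ (B *ᵥ y) ≤ 0 := by
      by_contra hc
      push_neg at hc
      have := h2 (-(x ⬝ᵥ (B *ᵥ x) + 1) / (2 * (x ⬝ᵥ (B *ᵥ y))))
      field_simp at this
      nlinarith
    have := Real.sqrt_nonneg (x ⬝ᵥ (B *ᵥ x))
    have := Real.sqrt_nonneg (y ⬝ᵥ (B *ᵥ y))
    nlinarith
  · have hd := discrim_le_zero key
    unfold discrim at hd
    have h1 : (x ⬝ᵥ (B *ᵥ y)) ^ 2 ≤ (x ⬝ᵥ (B *ᵥ x)) * (y ⬝ᵥ (B *ᵥ y)) := by nlinarith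
    calc x ⬝ᵥ (B *ᵥ y) ≤ |x ⬝ᵥ (B *ᵥ y)| := le_abs_self _
      _ = Real.sqrt ((x ⬝ᵥ (B *ᵥ y)) ^ 2) := (Real.sqrt_sq_eq_abs _).symm
      _ ≤ Real.sqrt ((x ⬝ᵥ (B *ᵥ x)) * (y ⬝ᵥ (B *ᵥ y))) := Real.sqrt_le_sqrt h1
      _ = _ := Real.sqrt_mul (psd_nonneg hB x) _

lemma mono_dot {n : ℕ} {B : Matrix (Fin n) (Fin n) ℝ} (hB : B.PosSemidef)
    {ζ : ℝ} (hζ : 1/2 ≤ ζ) (a b : Fin n → ℝ) :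
    (1/2) * (b ⬝ᵥ (B *ᵥ b) - a ⬝ᵥ (B *ᵥ a)) ≤
      (b - a) ⬝ᵥ (B *ᵥ ((1 - ζ) • a + ζ • b)) := by
  have h := psd_nonneg hB (b - a)
  have hsym := sym_dot hB.isHermitian a b
  simp only [mulVec_add, mulVec_sub, mulVec_smul, sub_dotProduct, dotProduct_sub,
    dotProduct_add, dotProduct_smul, smul_eq_mul] at h ⊢
  nlinarith [h, hsym]

lemma final_arith {Δt ζ ρ s E F : ℝ} (hΔt : 0 < Δt) (hζ1 : 1/2 ≤ ζ) (hζ2 : ζ ≤ 1)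
    (hρ : 0 ≤ ρ) (hs : 0 ≤ s) (hEnn : 0 ≤ E) (hFnn : 0 ≤ F) (hF : F ≤ s)
    (hkey : E ^ 2 ≤ F ^ 2 + 2 * Δt * ρ * ((1 - ζ) * F + ζ * E)) :
    E ≤ s + 2 * Δt * ρ := by
  by_contra hc
  push_neg at hc
  have h1 : 0 < E - (s + 2 * Δt * ρ) := by linarith
  have h2 : 0 < E + (s + 2 * Δt * ρ) - 2 * Δt * ζ * ρ := by nlinarith
  nlinarith [mul_pos h1 h2,
    mul_nonneg (sub_nonneg.2 hF) (add_nonneg hs hFnn),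
    mul_nonneg (mul_nonneg hΔt.le hρ) hs,
    mul_nonneg (mul_nonneg (mul_nonneg hΔt.le hρ) (by linarith : (0:ℝ) ≤ 1 - ζ)) (sub_nonneg.2 hF),
    mul_nonneg (mul_nonneg (mul_nonneg (mul_nonneg hΔt.le hΔt.le) hρ) hρ) (by linarith : (0:ℝ) ≤ 1 - ζ)]

set_option maxHeartbeats 1000000 in
lemma step_est {n : ℕ} {Δt ζ : ℝ} (hΔt : 0 < Δt) (hζ1 : 1/2 ≤ ζ) (hζ2 : ζ ≤ 1)
    {M A : Matrix (Fin n) (Fin n) ℝ} (hM : M.PosDef) (hA : A.PosSemidef)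
    (a b x y rr : Fin n → ℝ)
    (heq1 : (1 / Δt) • (M *ᵥ (b - a)) + A *ᵥ ((1 - ζ) • x + ζ • y) = rr)
    (heq2 : (1 / Δt) • (y - x) = (1 - ζ) • a + ζ • b)
    {s : ℝ} (hs : 0 ≤ s)
    (hF : Real.sqrt (a ⬝ᵥ (M *ᵥ a) + x ⬝ᵥ (A *ᵥ x)) ≤ s) :
    Real.sqrt (b ⬝ᵥ (M *ᵥ b) + y ⬝ᵥ (A *ᵥ y)) ≤
      s + 2 * Δt * Real.sqrt (rr ⬝ᵥ (M⁻¹ *ᵥ rr)) := by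
  have hMs := hM.posSemidef
  set v : Fin n → ℝ := (1 - ζ) • a + ζ • b with hv
  set ρ := Real.sqrt (rr ⬝ᵥ (M⁻¹ *ᵥ rr)) with hρdef
  have hρ : 0 ≤ ρ := Real.sqrt_nonneg _
  -- energy identity from eq1 dotted with v
  have hdot := congrArg (fun w => v ⬝ᵥ w) heq1
  simp only [dotProduct_add, dotProduct_smul, smul_eq_mul] at hdot
  -- v ⬝ M (b-a) ≥ (1/2)(bMb - aMa)
  have hMmono : (1/2) * (b ⬝ᵥ (M *ᵥ b) - a ⬝ᵥ (M *ᵥ a)) ≤ v ⬝ᵥ (M *ᵥ (b - a)) := by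
    have := mono_dot hMs hζ1 a b
    calc (1/2) * (b ⬝ᵥ (M *ᵥ b) - a ⬝ᵥ (M *ᵥ a))
        ≤ (b - a) ⬝ᵥ (M *ᵥ v) := this
      _ = v ⬝ᵥ (M *ᵥ (b - a)) := sym_dot hM.isHermitian _ _
  -- v ⬝ A mix : use heq2
  have hAmono : (1 / Δt) * ((1/2) * (y ⬝ᵥ (A *ᵥ y) - x ⬝ᵥ (A *ᵥ x))) ≤
      v ⬝ᵥ (A *ᵥ ((1 - ζ) • x + ζ • y)) := by
    have h2 : v = (1 / Δt) • (y - x) := heq2.symm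
    rw [h2]
    have := mono_dot hA (le_of_eq rfl |>.trans hζ1) x y
    have h3 : ((1 / Δt) • (y - x)) ⬝ᵥ (A *ᵥ ((1 - ζ) • x + ζ • y)) =
        (1 / Δt) * ((y - x) ⬝ᵥ (A *ᵥ ((1 - ζ) • x + ζ • y))) := by
      simp [smul_dotProduct]
    rw [h3]
    have hpos : 0 < 1 / Δt := by positivity
    exact mul_le_mul_of_nonneg_left this hpos.le
  -- bound rr ⬝ a and rr ⬝ b
  have hdet : IsUnit M.det := (Matrix.isUnit_iff_isUnit_det M).mp hM.isUnit
  have hw : M *ᵥ (M⁻¹ *ᵥ rr) = rr := by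
    rw [mulVec_mulVec, Matrix.mul_nonsing_inv _ hdet, one_mulVec]
  have hwMw : (M⁻¹ *ᵥ rr) ⬝ᵥ (M *ᵥ (M⁻¹ *ᵥ rr)) = rr ⬝ᵥ (M⁻¹ *ᵥ rr) := by
    rw [hw, dotProduct_comm]
  have hbound : ∀ u : Fin n → ℝ, rr ⬝ᵥ u ≤ Real.sqrt (u ⬝ᵥ (M *ᵥ u)) * ρ := by
    intro u
    have h1 : rr ⬝ᵥ u = u ⬝ᵥ (M *ᵥ (M⁻¹ *ᵥ rr)) := by rw [hw, dotProduct_comm]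
    have h2 := psd_cs hMs u (M⁻¹ *ᵥ rr)
    rw [hwMw] at h2
    rw [h1, hρdef]
    exact h2
  -- norms of pieces bounded by energies
  set QF := a ⬝ᵥ (M *ᵥ a) + x ⬝ᵥ (A *ᵥ x) with hQF
  set QE := b ⬝ᵥ (M *ᵥ b) + y ⬝ᵥ (A *ᵥ y) with hQE
  have hQFnn : 0 ≤ QF := add_nonneg (psd_nonneg hMs a) (psd_nonneg hA x)
  have hQEnn : 0 ≤ QE := add_nonneg (psd_nonneg hMs b) (psd_nonneg hA y)
  have hsa : Real.sqrt (a ⬝ᵥ (M *ᵥ a)) ≤ Real.sqrt QF :=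
    Real.sqrt_le_sqrt (by rw [hQF]; linarith [psd_nonneg hA x])
  have hsb : Real.sqrt (b ⬝ᵥ (M *ᵥ b)) ≤ Real.sqrt QE :=
    Real.sqrt_le_sqrt (by rw [hQE]; linarith [psd_nonneg hA y])
  -- main energy inequality
  have hra := hbound a
  have hrb := hbound b
  have hrv : v ⬝ᵥ rr ≤ ((1 - ζ) * Real.sqrt QF + ζ * Real.sqrt QE) * ρ := by
    have hva : v ⬝ᵥ rr = (1 - ζ) * (rr ⬝ᵥ a) + ζ * (rr ⬝ᵥ b) := by
      rw [dotProduct_comm, hv]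
      simp [dotProduct_add, dotProduct_smul]
    rw [hva]
    have h1 : rr ⬝ᵥ a ≤ Real.sqrt QF * ρ := hra.trans (mul_le_mul_of_nonneg_right hsa hρ)
    have h2 : rr ⬝ᵥ b ≤ Real.sqrt QE * ρ := hrb.trans (mul_le_mul_of_nonneg_right hsb hρ)
    nlinarith [h1, h2, hζ1, hζ2]
  -- combine: QE - QF ≤ 2Δt (v ⬝ rr)
  have hcomb : QE - QF ≤ 2 * Δt * (v ⬝ᵥ rr) := by
    have hpos : 0 < 1 / Δt := by positivity
    have hMin' := mul_le_mul_of_nonneg_left hMmono hpos.le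
    have hstep : (1 / Δt) * ((1/2) * (QE - QF)) ≤ v ⬝ᵥ rr := by
      rw [hQE, hQF]; ring_nf at hMin' hAmono hdot ⊢; linarith [hMin', hAmono, hdot]
    have hmul : (1/2) * (QE - QF) ≤ Δt * (v ⬝ᵥ rr) := by
      have := mul_le_mul_of_nonneg_left hstep hΔt.le
      have hΔ1 : Δt * (1 / Δt) = 1 := by field_simp
      nlinarith [this]
    linarith
  -- final arithmetic
  set E := Real.sqrt QE with hE
  set F := Real.sqrt QF with hFd
  have hEnn : 0 ≤ E := Real.sqrt_nonneg _
  have hFnn : 0 ≤ F := Real.sqrt_nonneg _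
  have hE2 : E ^ 2 = QE := Real.sq_sqrt hQEnn
  have hF2 : F ^ 2 = QF := Real.sq_sqrt hQFnn
  have hkey : E ^ 2 ≤ F ^ 2 + 2 * Δt * ρ * ((1 - ζ) * F + ζ * E) := by
    rw [hE2, hF2]
    have h2 := mul_le_mul_of_nonneg_left hrv (show (0:ℝ) ≤ 2 * Δt by positivity)
    nlinarith [hcomb, h2]
  exact final_arith hΔt hζ1 hζ2 hρ hs hEnn hFnn (hFd ▸ hF) hkey

/-- Pointwise-in-time a posteriori energy error estimate for the ζ-scheme
(`ζ ∈ [1/2,1]`, `M` symmetric positive definite, `A` symmetric positive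
semidefinite), for trajectories with zero initial error:
for every `k ∈ {1,…,K}`,
`((ė^k)ᵀMė^k + (e^k)ᵀAe^k)^{1/2} ≤ 2Δt·Σ_{k'=1}^{k} ((r^{k'})ᵀM⁻¹r^{k'})^{1/2}`. -/
theorem error_scheme_pointwise_apost_estimate (n K : ℕ) (hK : 1 ≤ K)
    (Δt : ℝ) (hΔt : 0 < Δt) (ζ : ℝ) (hζ : ζ ∈ Set.Icc (1 / 2 : ℝ) 1)
    (M A : Matrix (Fin n) (Fin n) ℝ) (hM : M.PosDef) (hA : A.PosSemidef)
    (e de r : ℕ → Fin n → ℝ)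
    (he0 : e 0 = 0) (hde0 : de 0 = 0)
    (h1 : ∀ k, 1 ≤ k → k ≤ K →
      (1 / Δt) • (M *ᵥ (de k - de (k - 1))) +
        A *ᵥ ((1 - ζ) • e (k - 1) + ζ • e k) = r k)
    (h2 : ∀ k, 1 ≤ k → k ≤ K →
      (1 / Δt) • (e k - e (k - 1)) = (1 - ζ) • de (k - 1) + ζ • de k) :
    ∀ k, 1 ≤ k → k ≤ K →
      Real.sqrt (de k ⬝ᵥ (M *ᵥ de k) + e k ⬝ᵥ (A *ᵥ e k)) ≤
        2 * Δt * ∑ k' ∈ Finset.Icc 1 k, Real.sqrt (r k' ⬝ᵥ (M⁻¹ *ᵥ r k')) := by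
  obtain ⟨hζ1, hζ2⟩ := hζ
  suffices H : ∀ k, k ≤ K →
      Real.sqrt (de k ⬝ᵥ (M *ᵥ de k) + e k ⬝ᵥ (A *ᵥ e k)) ≤
        2 * Δt * ∑ k' ∈ Finset.Icc 1 k, Real.sqrt (r k' ⬝ᵥ (M⁻¹ *ᵥ r k')) by
    exact fun k _ hk2 => H k hk2
  intro k
  induction k with
  | zero => intro _; simp [he0, hde0]
  | succ m ih =>
    intro hmK
    have ihm := ih (by omega)
    have heq1 := h1 (m + 1) (by omega) hmK
    have heq2 := h2 (m + 1) (by omega) hmK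
    simp only [Nat.add_sub_cancel] at heq1 heq2
    have hs : 0 ≤ 2 * Δt * ∑ k' ∈ Finset.Icc 1 m, Real.sqrt (r k' ⬝ᵥ (M⁻¹ *ᵥ r k')) := by
      have := Finset.sum_nonneg (fun i (_ : i ∈ Finset.Icc 1 m) => Real.sqrt_nonneg (r i ⬝ᵥ (M⁻¹ *ᵥ r i)))
      positivity
    have hstep := step_est hΔt hζ1 hζ2 hM hA (de m) (de (m + 1)) (e m) (e (m + 1))
      (r (m + 1)) heq1 heq2 hs ihm
    rw [Finset.sum_Icc_succ_top (Nat.le_add_left 1 m)]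
    linarith [hstep]
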